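/- If a Latin puzzle admits a monotonic full polynomial attrition sequence, then it is fair. Precisely: let D0 : X → Set Λ be a solution-domain (the initial domain) and let S be a finite list of monotonic safe attrition maps such that applying the maps of S in order to D0 yields the singleton domain x ↦ {s x}. Then for every finite list S' of safe attrition maps, applying first the maps of S' and then the maps of S to D0 again yields the singleton domain x ↦ {s x}; in particular, every polynomial attrition sequence is an initial segment of a full polynomial attrition sequence. -/

import Mathlib

/-- A board domain `D` is a *solution-domain* for the solution `s` if `s x ∈ D x` for every
cell `x`. -/
def SolDom {X Λ : Type*} (s : X → Λ) (D : X → Set Λ) : Prop :=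
  ∀ x, s x ∈ D x

/-- A map `T` on board domains is a *safe attrition map* for `s` if it maps every
solution-domain to a smaller (pointwise `⊆`) solution-domain. -/
def SafeAttr {X Λ : Type*} (s : X → Λ) (T : (X → Set Λ) → (X → Set Λ)) : Prop :=
  ∀ D : X → Set Λ, SolDom s D → (∀ x, T D x ⊆ D x) ∧ SolDom s (T D)

/-- A safe attrition map is *monotonic* if `T D' ≤ T D` whenever `D' ≤ D` are
solution-domains. -/
def MonoAttr {X Λ : Type*} (s : X → Λ) (T : (X → Set Λ) → (X → Set Λ)) : Prop :=
  ∀ D D' : X → Set Λ, SolDom s D → SolDom s D' → (∀ x, D' x ⊆ D x) →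
    ∀ x, T D' x ⊆ T D x

/-- Apply a finite list of attrition maps in order to a board domain. -/
def applySeq {X Λ : Type*} (S : List ((X → Set Λ) → (X → Set Λ))) (D : X → Set Λ) :
    X → Set Λ :=
  S.foldl (fun D T => T D) D

lemma applySeq_sol {X Λ : Type*} (s : X → Λ) :
    ∀ (S : List ((X → Set Λ) → (X → Set Λ))) (D : X → Set Λ),
      (∀ T ∈ S, SafeAttr s T) → SolDom s D →
      SolDom s (applySeq S D) ∧ (∀ x, applySeq S D x ⊆ D x)
  | [], D, _, hD => ⟨hD, fun _ => subset_rfl⟩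
  | T :: S, D, hS, hD => by
    have hT := hS T List.mem_cons_self D hD
    have ih := applySeq_sol s S (T D) (fun T' hT' => hS T' (List.mem_cons_of_mem _ hT')) hT.2
    exact ⟨ih.1, fun x => (ih.2 x).trans (hT.1 x)⟩

lemma applySeq_mono {X Λ : Type*} (s : X → Λ) :
    ∀ (S : List ((X → Set Λ) → (X → Set Λ))) (D D' : X → Set Λ),
      (∀ T ∈ S, SafeAttr s T ∧ MonoAttr s T) → SolDom s D → SolDom s D' →
      (∀ x, D' x ⊆ D x) → ∀ x, applySeq S D' x ⊆ applySeq S D x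
  | [], _, _, _, _, _, h, x => h x
  | T :: S, D, D', hS, hD, hD', hle, x => by
    have hT := hS T List.mem_cons_self
    have hrest : ∀ T' ∈ S, SafeAttr s T' ∧ MonoAttr s T' :=
      fun T' hT' => hS T' (List.mem_cons_of_mem _ hT')
    exact applySeq_mono s S (T D) (T D') hrest ((hT.1 D hD).2) ((hT.1 D' hD').2)
      (hT.2 D D' hD hD' hle) x

/-- **A Latin puzzle is fair if it admits a monotonic full polynomial attrition sequence.**
If `S` is a list of monotonic safe attrition maps whose composite takes the initial
solution-domain `D0` to the singleton domain `x ↦ {s x}`, then for any list `S'` of safe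
attrition maps, applying `S'` first and then `S` to `D0` again yields the singleton domain. -/
theorem fair_of_monotonic_full_attrition {X Λ : Type*} (s : X → Λ)
    (D0 : X → Set Λ) (hD0 : SolDom s D0)
    (S : List ((X → Set Λ) → (X → Set Λ)))
    (hS : ∀ T ∈ S, SafeAttr s T ∧ MonoAttr s T)
    (hFull : applySeq S D0 = fun x => {s x}) :
    ∀ S' : List ((X → Set Λ) → (X → Set Λ)),
      (∀ T ∈ S', SafeAttr s T) →
      applySeq S (applySeq S' D0) = fun x => {s x} := by
  intro S' hS'
  have hD' := applySeq_sol s S' D0 hS' hD0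
  funext x
  apply Set.Subset.antisymm
  · have h := applySeq_mono s S D0 (applySeq S' D0) hS hD0 hD'.1 hD'.2 x
    rw [hFull] at h
    exact h
  · intro a ha
    rcases ha with rfl
    exact (applySeq_sol s S (applySeq S' D0) (fun T hT => (hS T hT).1) hD'.1).1 x
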